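/- Define the operator L_t(X) := inf{x ≥ 0 : E[l(t, x + X)] ≥ 0} for X ∈ L²(F_T). Then L_t is well-defined (the infimum is over a nonempty set and finite) and for all X, Y ∈ L²(F_T): |L_t(X) - L_t(Y)| ≤ (C_l/c_l) e^{κT} G^{κ}_{0,T}[|X - Y|]. -/

import Mathlib

open MeasureTheory Real Set

/-- Define the operator
`L_t(X) := inf{x ≥ 0 : E[l(t, x + X)] ≥ 0}` for `X ∈ L²(F_T)` (the loss at the fixed
time `t` being `lt : Ω → ℝ → ℝ`).  Then `L_t` is well defined (the infimum is over a
nonempty set, hence finite) and for all `X, Y ∈ L²(F_T)`: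
`|L_t(X) - L_t(Y)| ≤ (C_l/c_l) e^{κT} G^κ_{0,T}[|X - Y|]`. -/
theorem stmt_6 {Ω : Type*} [MeasurableSpace Ω] (P : Measure Ω) [IsProbabilityMeasure P]
    (T κ cl Cl : ℝ) (hT : 0 < T) (hκ : 0 < κ) (hcl : 0 < cl) (hCl : cl ≤ Cl)
    (E Gpos Gneg : (Ω → ℝ) → ℝ)
    -- monotonicity of `E`
    (hEmono : ∀ X Y : Ω → ℝ, (∀ᵐ ω ∂P, X ω ≤ Y ω) → E X ≤ E Y)
    -- two-sided domination of `E` by the g-expectations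
    (hdom : ∀ X₁ X₂ : Ω → ℝ,
      Gneg (fun ω => X₁ ω - X₂ ω) ≤ E X₁ - E X₂
        ∧ E X₁ - E X₂ ≤ Gpos (fun ω => X₁ ω - X₂ ω))
    (hGnegmono : ∀ X Y : Ω → ℝ, (∀ᵐ ω ∂P, X ω ≤ Y ω) → Gneg X ≤ Gneg Y)
    (hGposmono : ∀ X Y : Ω → ℝ, (∀ᵐ ω ∂P, X ω ≤ Y ω) → Gpos X ≤ Gpos Y)
    -- positive homogeneity of `G^κ` and the value of `G^{-κ}` on constants
    (hGposhom : ∀ (c : ℝ), 0 < c → ∀ X : Ω → ℝ,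
      Gpos (fun ω => c * X ω) = c * Gpos X)
    (hGnegconst : ∀ c : ℝ, 0 < c → Gneg (fun _ => c) = c * Real.exp (-κ * T))
    -- the loss function at the fixed time `t`
    (lt : Ω → ℝ → ℝ)
    (hlmono : ∀ ω, StrictMono (lt ω))
    (hbilip : ∀ ω x y, cl * |x - y| ≤ |lt ω x - lt ω y|
      ∧ |lt ω x - lt ω y| ≤ Cl * |x - y|)
    (hl0 : MemLp (fun ω => lt ω 0) 2 P)
    (L : (Ω → ℝ) → ℝ)
    (hL : ∀ X : Ω → ℝ, L X = sInf {x : ℝ | 0 ≤ x ∧ 0 ≤ E (fun ω => lt ω (x + X ω))}) :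
    (∀ X : Ω → ℝ, MemLp X 2 P →
      {x : ℝ | 0 ≤ x ∧ 0 ≤ E (fun ω => lt ω (x + X ω))}.Nonempty)
      ∧ ∀ X Y : Ω → ℝ, MemLp X 2 P → MemLp Y 2 P →
        |L X - L Y| ≤ (Cl / cl) * Real.exp (κ * T) * Gpos (fun ω => |X ω - Y ω|) := by

  have hCl0 : 0 < Cl := lt_of_lt_of_le hcl hCl
  have hprod : Real.exp (κ * T) * Real.exp (-κ * T) = 1 := by
    rw [← Real.exp_add]; ring_nf; exact Real.exp_zero
  have hexpneg : (0:ℝ) < Real.exp (-κ * T) := Real.exp_pos _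
  have hexppos : (0:ℝ) < Real.exp (κ * T) := Real.exp_pos _
  -- pointwise lower bound for increments of lt
  have key_low : ∀ ω a b, b ≤ a → cl * (a - b) ≤ lt ω a - lt ω b := by
    intro ω a b hba
    have h := (hbilip ω a b).1
    have hmono := (hlmono ω).monotone hba
    rwa [abs_of_nonneg (by linarith), abs_of_nonneg (by linarith)] at h
  -- nonemptiness
  have hne : ∀ X : Ω → ℝ,
      {x : ℝ | 0 ≤ x ∧ 0 ≤ E (fun ω => lt ω (x + X ω))}.Nonempty := by
    intro X
    set m := E (fun ω => lt ω (X ω)) with hm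
    set x := max 1 ((-m) * Real.exp (κ * T) / cl) with hx
    have hx1 : (1:ℝ) ≤ x := le_max_left _ _
    have hxpos : (0:ℝ) < x := lt_of_lt_of_le one_pos hx1
    refine ⟨x, le_of_lt hxpos, ?_⟩
    have hdiff : ∀ᵐ ω ∂P, (fun _ => cl * x) ω ≤
        (fun ω => lt ω (x + X ω) - lt ω (X ω)) ω := by
      refine Filter.Eventually.of_forall fun ω => ?_
      have := key_low ω (x + X ω) (X ω) (by linarith)
      calc cl * x = cl * (x + X ω - X ω) := by ring
        _ ≤ _ := this
    have h1 : Gneg (fun _ => cl * x) ≤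
        Gneg (fun ω => lt ω (x + X ω) - lt ω (X ω)) := hGnegmono _ _ hdiff
    have h2 := (hdom (fun ω => lt ω (x + X ω)) (fun ω => lt ω (X ω))).1
    rw [hGnegconst (cl * x) (mul_pos hcl hxpos)] at h1
    have hxm : (-m) * Real.exp (κ * T) / cl ≤ x := le_max_right _ _
    have hxm2 : (-m) * Real.exp (κ * T) ≤ x * cl := (div_le_iff₀ hcl).mp hxm
    have hkey : -m ≤ cl * x * Real.exp (-κ * T) := by
      have h3 : (-m) * (Real.exp (κ * T) * Real.exp (-κ * T)) ≤
          cl * x * Real.exp (-κ * T) := by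
        calc (-m) * (Real.exp (κ * T) * Real.exp (-κ * T))
            = ((-m) * Real.exp (κ * T)) * Real.exp (-κ * T) := by ring
          _ ≤ (x * cl) * Real.exp (-κ * T) :=
              mul_le_mul_of_nonneg_right hxm2 hexpneg.le
          _ = cl * x * Real.exp (-κ * T) := by ring
      rw [hprod, mul_one] at h3
      exact h3
    have : m + cl * x * Real.exp (-κ * T) ≤ E (fun ω => lt ω (x + X ω)) := by
      have := le_trans h1 h2
      linarith
    linarith
  -- Gpos of 0 is 0
  have hGpos0 : Gpos (fun _ => (0:ℝ)) = 0 := by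
    have h := hGposhom 2 two_pos (fun _ => (0:ℝ))
    have he : (fun ω : Ω => (2:ℝ) * (0:ℝ)) = (fun _ : Ω => (0:ℝ)) := by
      funext ω; ring
    rw [he] at h
    linarith
  -- one-sided estimate
  have main : ∀ X Y : Ω → ℝ,
      L X ≤ L Y + (Cl / cl) * Real.exp (κ * T) * Gpos (fun ω => |X ω - Y ω|) := by
    intro X Y
    set G := Gpos (fun ω => |X ω - Y ω|) with hGdef
    have hG0 : 0 ≤ G := by
      rw [← hGpos0]
      exact hGposmono _ _ (Filter.Eventually.of_forall fun ω => abs_nonneg _)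
    set δ := (Cl / cl) * Real.exp (κ * T) * G with hδdef
    have hδ0 : 0 ≤ δ := by positivity
    have hSX := hne X
    have hSY := hne Y
    have hbdd : BddBelow {x : ℝ | 0 ≤ x ∧ 0 ≤ E (fun ω => lt ω (x + X ω))} :=
      ⟨0, fun x hx => hx.1⟩
    -- step: Gpos bound between the two shifted losses
    have hstep1 : ∀ x : ℝ, E (fun ω => lt ω (x + δ + Y ω)) - Cl * G ≤
        E (fun ω => lt ω (x + δ + X ω)) := by
      intro x
      have hpt : ∀ᵐ ω ∂P, (fun ω => lt ω (x + δ + Y ω) - lt ω (x + δ + X ω)) ω ≤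
          (fun ω => Cl * |X ω - Y ω|) ω := by
        refine Filter.Eventually.of_forall fun ω => ?_
        have h := (hbilip ω (x + δ + Y ω) (x + δ + X ω)).2
        have he : |x + δ + Y ω - (x + δ + X ω)| = |X ω - Y ω| := by
          rw [show x + δ + Y ω - (x + δ + X ω) = -(X ω - Y ω) by ring, abs_neg]
        rw [he] at h
        exact le_trans (le_abs_self _) h
      have h1 : Gpos (fun ω => lt ω (x + δ + Y ω) - lt ω (x + δ + X ω)) ≤
          Gpos (fun ω => Cl * |X ω - Y ω|) := hGposmono _ _ hpt
      have h2 := (hdom (fun ω => lt ω (x + δ + Y ω)) (fun ω => lt ω (x + δ + X ω))).2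
      rw [hGposhom Cl hCl0 _] at h1
      linarith
    -- claim: x + δ works for X whenever x works for Y
    have hclaim : ∀ x : ℝ, 0 ≤ x → 0 ≤ E (fun ω => lt ω (x + Y ω)) →
        0 ≤ E (fun ω => lt ω (x + δ + X ω)) := by
      intro x hx hEx
      rcases eq_or_lt_of_le hG0 with hGeq | hGlt
      · -- G = 0, so δ = 0
        have hδ : δ = 0 := by rw [hδdef, ← hGeq]; ring
        have he : (fun ω => lt ω (x + δ + X ω)) = (fun ω => lt ω (x + δ + X ω)) := rfl
        have h1 := hstep1 x
        have he2 : (fun ω => lt ω (x + δ + Y ω)) = (fun ω => lt ω (x + Y ω)) := by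
          funext ω; rw [hδ]; ring_nf
        rw [he2, ← hGeq] at h1
        linarith
      · -- G > 0, hence δ > 0
        have hδpos : 0 < δ := by
          rw [hδdef]; positivity
        have hpt : ∀ᵐ ω ∂P, (fun _ => cl * δ) ω ≤
            (fun ω => lt ω (x + δ + Y ω) - lt ω (x + Y ω)) ω := by
          refine Filter.Eventually.of_forall fun ω => ?_
          have := key_low ω (x + δ + Y ω) (x + Y ω) (by linarith)
          calc cl * δ = cl * (x + δ + Y ω - (x + Y ω)) := by ring
            _ ≤ _ := this
        have h1 : Gneg (fun _ => cl * δ) ≤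
            Gneg (fun ω => lt ω (x + δ + Y ω) - lt ω (x + Y ω)) := hGnegmono _ _ hpt
        have h2 := (hdom (fun ω => lt ω (x + δ + Y ω)) (fun ω => lt ω (x + Y ω))).1
        rw [hGnegconst (cl * δ) (mul_pos hcl hδpos)] at h1
        have hrw : cl * δ * Real.exp (-κ * T) = Cl * G := by
          have hc : cl ≠ 0 := ne_of_gt hcl
          have hdc : Cl / cl * cl = Cl := div_mul_cancel₀ Cl hc
          rw [hδdef]
          linear_combination cl * (Cl / cl) * G * hprod + G * hdc
        have h3 := hstep1 x
        nlinarith [h1, h2]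
    -- conclude
    have hLle : ∀ x ∈ {x : ℝ | 0 ≤ x ∧ 0 ≤ E (fun ω => lt ω (x + Y ω))},
        L X ≤ x + δ := by
      intro x hx
      rw [hL X]
      exact csInf_le hbdd ⟨by linarith [hx.1], hclaim x hx.1 hx.2⟩
    have : L X - δ ≤ L Y := by
      rw [hL Y]
      exact le_csInf hSY fun x hx => by linarith [hLle x hx]
    linarith
  refine ⟨fun X _ => hne X, fun X Y _ _ => ?_⟩
  have h1 := main X Y
  have h2 := main Y X
  have habs : (fun ω => |Y ω - X ω|) = (fun ω => |X ω - Y ω|) := by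
    funext ω; rw [abs_sub_comm]
  rw [habs] at h2
  rw [abs_sub_le_iff]
  constructor <;> linarith
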